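/- Let ⪯ be a disjunctive entrenchment relation. Then for all α, β: α maxiconsistently infers β if and only if ¬β ⪯ ¬α. -/
import Mathlib


/-- A propositional language: a type of sentences with boolean connectives. -/
structure Lang (L : Type) where
  or : L → L → L
  and : L → L → L
  not : L → L
  imp : L → L → L
  bot : L
  top : L

/-- A classical valuation of the language: respects all connectives. -/
def Lang.Val {L : Type} (S : Lang L) (v : L → Prop) : Prop :=
  (∀ a b, v (S.or a b) ↔ v a ∨ v b) ∧
  (∀ a b, v (S.and a b) ↔ v a ∧ v b) ∧
  (∀ a, v (S.not a) ↔ ¬ v a) ∧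
  (∀ a b, v (S.imp a b) ↔ (v a → v b)) ∧
  ¬ v S.bot ∧ v S.top

/-- Classical consequence from a set of premises. -/
def Lang.SEnt {L : Type} (S : Lang L) (X : Set L) (b : L) : Prop :=
  ∀ v, S.Val v → (∀ a ∈ X, v a) → v b

/-- Classical consequence between single sentences: α ⊢ β. -/
def Lang.ent {L : Type} (S : Lang L) (a b : L) : Prop := S.SEnt {a} b

/-- Deductive closure. -/
def Lang.Cn {L : Type} (S : Lang L) (X : Set L) : Set L := {b | S.SEnt X b}

/-- Coh(α) = {β | ¬ (β ⪯ ¬α)}. -/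
def Coh {L : Type} (S : Lang L) (pr : L → L → Prop) (a : L) : Set L :=
  {b | ¬ pr b (S.not a)}

/-- The base of α: deductively closed subsets of Coh(α). -/
def Base {L : Type} (S : Lang L) (pr : L → L → Prop) (a : L) : Set (Set L) :=
  {U | U = S.Cn U ∧ U ⊆ Coh S pr a}

/-- The maximal base of α. -/
def MaxBase {L : Type} (S : Lang L) (pr : L → L → Prop) (a : L) : Set (Set L) :=
  {U | U ∈ Base S pr a ∧ ∀ U', U' = S.Cn U' → U ⊂ U' → U' ∉ Base S pr a}

/-- Maxiconsistent inference: α |~⪯ β. -/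
def MInf {L : Type} (S : Lang L) (pr : L → L → Prop) (a b : L) : Prop :=
  ∀ U ∈ MaxBase S pr a, b ∈ S.Cn (U ∪ {a})

/- ===================== Auxiliary development ===================== -/

/-- Finite satisfiability of a set of sentences. -/
def FinSat {L : Type} (S : Lang L) (X : Set L) : Prop :=
  ∀ F : Finset L, ↑F ⊆ X → ∃ v, S.Val v ∧ ∀ c ∈ F, v c

lemma Cn_idem {L : Type} (S : Lang L) (X : Set L) : S.Cn (S.Cn X) = S.Cn X := by
  apply Set.Subset.antisymm
  · intro c hc w hw hwX
    exact hc w hw (fun d hd => hd w hw hwX)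
  · intro c hc w hw hwC
    exact hc w hw (fun d hd => hwC d (fun u hu hux => hux d hd))

lemma ent_taut_orimp {L : Type} (S : Lang L) (c a b : L) :
    S.ent c (S.or (S.not b) (S.imp a b)) := by
  intro w hw _
  obtain ⟨hor, -, hnot, himp, -, -⟩ := hw
  rw [hor, hnot, himp]
  tauto

lemma ent_notimp {L : Type} (S : Lang L) (a b : L) :
    S.ent (S.not (S.imp a b)) (S.not b) := by
  intro w hw hws
  obtain ⟨hor, -, hnot, himp, -, -⟩ := hw
  have h := hws _ rfl
  rw [hnot, himp] at h
  rw [hnot]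
  tauto

lemma ent_impimp {L : Type} (S : Lang L) (a b c : L) :
    S.ent (S.imp (S.imp a b) c) (S.or c (S.not (S.imp a b))) := by
  intro w hw hws
  obtain ⟨hor, -, hnot, himp, -, -⟩ := hw
  have h := hws _ rfl
  rw [himp] at h
  rw [hor, hnot]
  tauto

/-- Lindenbaum / compactness: a finitely satisfiable set is satisfiable. -/
lemma lindenbaum {L : Type} (S : Lang L) {X : Set L} (h : FinSat S X) :
    ∃ v, S.Val v ∧ ∀ c ∈ X, v c := by
  classical
  have hchain : ∀ c ⊆ {Y : Set L | FinSat S Y}, IsChain (· ⊆ ·) c → c.Nonempty →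
      ∃ ub ∈ {Y : Set L | FinSat S Y}, ∀ s ∈ c, s ⊆ ub := by
    intro c hc hch hne
    refine ⟨⋃₀ c, ?_, fun s hs => Set.subset_sUnion_of_mem hs⟩
    intro F hF
    haveI : Nonempty c := hne.to_subtype
    have hdir : Directed (· ⊆ ·) (fun i : c => (i : Set L)) := by
      intro i j
      rcases hch.total i.2 j.2 with h' | h'
      · exact ⟨j, h', subset_rfl⟩
      · exact ⟨i, subset_rfl, h'⟩
    obtain ⟨⟨Y, hY⟩, hFY⟩ := hdir.exists_mem_subset_of_finset_subset_biUnion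
      (by rwa [← Set.sUnion_eq_iUnion])
    exact hc hY F hFY
  obtain ⟨M, hXM, hMmem, hMmax⟩ := zorn_subset_nonempty {Y : Set L | FinSat S Y} hchain X h
  have hsat : ∀ G : Finset L, (∀ x ∈ G, x ∈ M) → ∃ w, S.Val w ∧ ∀ x ∈ G, w x :=
    fun G hG => hMmem G (fun x hx => hG x (Finset.mem_coe.mp hx))
  have hbad : ∀ p, p ∉ M →
      ∃ F : Finset L, (∀ x ∈ F, x ∈ M) ∧ ∀ w, S.Val w → (∀ x ∈ F, w x) → ¬ w p := by
    intro p hp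
    have hnf : ¬ FinSat S (insert p M) := fun hf =>
      hp (hMmax hf (Set.subset_insert _ _) (Set.mem_insert _ _))
    rw [FinSat] at hnf
    push_neg at hnf
    obtain ⟨F, hFsub, hFno⟩ := hnf
    refine ⟨F.erase p, ?_, ?_⟩
    · intro x hx
      have hx1 : x ∈ F := Finset.mem_of_mem_erase hx
      have hx2 : x ≠ p := Finset.ne_of_mem_erase hx
      rcases Set.mem_insert_iff.mp (hFsub (Finset.mem_coe.mpr hx1)) with h | h
      · exact absurd h hx2
      · exact h
    · intro w hw hwF hwp
      obtain ⟨x, hxF, hxnv⟩ := hFno w hw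
      by_cases hxp : x = p
      · exact hxnv (hxp ▸ hwp)
      · exact hxnv (hwF x (Finset.mem_erase.mpr ⟨hxp, hxF⟩))
  refine ⟨fun c => c ∈ M, ⟨?_, ?_, ?_, ?_, ?_, ?_⟩, fun c hc => hXM hc⟩
  · -- or
    intro p q
    constructor
    · intro hpq
      by_contra hnpq
      push_neg at hnpq
      obtain ⟨F₁, hF₁M, hF₁⟩ := hbad p hnpq.1
      obtain ⟨F₂, hF₂M, hF₂⟩ := hbad q hnpq.2
      obtain ⟨w, hw, hwF⟩ := hsat (insert (S.or p q) (F₁ ∪ F₂)) (by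
        intro x hx
        rcases Finset.mem_insert.mp hx with rfl | hx
        · exact hpq
        · rcases Finset.mem_union.mp hx with hx | hx
          · exact hF₁M x hx
          · exact hF₂M x hx)
      have h1 : w (S.or p q) := hwF _ (Finset.mem_insert_self _ _)
      have h2 : ∀ x ∈ F₁, w x :=
        fun x hx => hwF x (Finset.mem_insert_of_mem (Finset.mem_union_left _ hx))
      have h3 : ∀ x ∈ F₂, w x :=
        fun x hx => hwF x (Finset.mem_insert_of_mem (Finset.mem_union_right _ hx))
      rcases (hw.1 p q).mp h1 with h | h
      · exact hF₁ w hw h2 h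
      · exact hF₂ w hw h3 h
    · intro hpq
      by_contra hnor
      obtain ⟨F, hFM, hF⟩ := hbad _ hnor
      rcases hpq with hp | hq
      · obtain ⟨w, hw, hwF⟩ := hsat (insert p F) (by
          intro x hx
          rcases Finset.mem_insert.mp hx with rfl | hx
          · exact hp
          · exact hFM x hx)
        exact hF w hw (fun x hx => hwF x (Finset.mem_insert_of_mem hx))
          ((hw.1 p q).mpr (Or.inl (hwF _ (Finset.mem_insert_self _ _))))
      · obtain ⟨w, hw, hwF⟩ := hsat (insert q F) (by
          intro x hx
          rcases Finset.mem_insert.mp hx with rfl | hx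
          · exact hq
          · exact hFM x hx)
        exact hF w hw (fun x hx => hwF x (Finset.mem_insert_of_mem hx))
          ((hw.1 p q).mpr (Or.inr (hwF _ (Finset.mem_insert_self _ _))))
  · -- and
    intro p q
    constructor
    · intro hpq
      constructor
      · by_contra hp
        obtain ⟨F, hFM, hF⟩ := hbad p hp
        obtain ⟨w, hw, hwF⟩ := hsat (insert (S.and p q) F) (by
          intro x hx
          rcases Finset.mem_insert.mp hx with rfl | hx
          · exact hpq
          · exact hFM x hx)
        exact hF w hw (fun x hx => hwF x (Finset.mem_insert_of_mem hx))
          ((hw.2.1 p q).mp (hwF _ (Finset.mem_insert_self _ _))).1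
      · by_contra hq
        obtain ⟨F, hFM, hF⟩ := hbad q hq
        obtain ⟨w, hw, hwF⟩ := hsat (insert (S.and p q) F) (by
          intro x hx
          rcases Finset.mem_insert.mp hx with rfl | hx
          · exact hpq
          · exact hFM x hx)
        exact hF w hw (fun x hx => hwF x (Finset.mem_insert_of_mem hx))
          ((hw.2.1 p q).mp (hwF _ (Finset.mem_insert_self _ _))).2
    · rintro ⟨hp, hq⟩
      by_contra hand
      obtain ⟨F, hFM, hF⟩ := hbad _ hand
      obtain ⟨w, hw, hwF⟩ := hsat (insert p (insert q F)) (by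
        intro x hx
        rcases Finset.mem_insert.mp hx with rfl | hx
        · exact hp
        · rcases Finset.mem_insert.mp hx with rfl | hx
          · exact hq
          · exact hFM x hx)
      exact hF w hw
        (fun x hx => hwF x (Finset.mem_insert_of_mem (Finset.mem_insert_of_mem hx)))
        ((hw.2.1 p q).mpr ⟨hwF _ (Finset.mem_insert_self _ _),
          hwF _ (Finset.mem_insert_of_mem (Finset.mem_insert_self _ _))⟩)
  · -- not
    intro p
    constructor
    · intro hnp hp
      obtain ⟨w, hw, hwF⟩ := hsat {p, S.not p} (by
        intro x hx
        rcases Finset.mem_insert.mp hx with rfl | hx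
        · exact hp
        · rcases Finset.mem_singleton.mp hx with rfl
          exact hnp)
      exact (hw.2.2.1 p).mp (hwF _ (by simp)) (hwF _ (by simp))
    · intro hp
      by_contra hnp
      obtain ⟨F₁, hF₁M, hF₁⟩ := hbad p hp
      obtain ⟨F₂, hF₂M, hF₂⟩ := hbad _ hnp
      obtain ⟨w, hw, hwF⟩ := hsat (F₁ ∪ F₂) (by
        intro x hx
        rcases Finset.mem_union.mp hx with hx | hx
        · exact hF₁M x hx
        · exact hF₂M x hx)
      have h1 : ¬ w p := hF₁ w hw (fun x hx => hwF x (Finset.mem_union_left _ hx))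
      have h2 : ¬ w (S.not p) := hF₂ w hw (fun x hx => hwF x (Finset.mem_union_right _ hx))
      exact h2 ((hw.2.2.1 p).mpr h1)
  · -- imp
    intro p q
    constructor
    · intro himp hp
      by_contra hq
      obtain ⟨F, hFM, hF⟩ := hbad q hq
      obtain ⟨w, hw, hwF⟩ := hsat (insert p (insert (S.imp p q) F)) (by
        intro x hx
        rcases Finset.mem_insert.mp hx with rfl | hx
        · exact hp
        · rcases Finset.mem_insert.mp hx with rfl | hx
          · exact himp
          · exact hFM x hx)
      exact hF w hw
        (fun x hx => hwF x (Finset.mem_insert_of_mem (Finset.mem_insert_of_mem hx)))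
        ((hw.2.2.2.1 p q).mp
          (hwF _ (Finset.mem_insert_of_mem (Finset.mem_insert_self _ _)))
          (hwF _ (Finset.mem_insert_self _ _)))
    · intro hpq
      by_contra him
      obtain ⟨F, hFM, hF⟩ := hbad _ him
      by_cases hp : p ∈ M
      · have hq := hpq hp
        obtain ⟨w, hw, hwF⟩ := hsat (insert q F) (by
          intro x hx
          rcases Finset.mem_insert.mp hx with rfl | hx
          · exact hq
          · exact hFM x hx)
        exact hF w hw (fun x hx => hwF x (Finset.mem_insert_of_mem hx))
          ((hw.2.2.2.1 p q).mpr (fun _ => hwF _ (Finset.mem_insert_self _ _)))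
      · obtain ⟨F₁, hF₁M, hF₁⟩ := hbad p hp
        obtain ⟨w, hw, hwF⟩ := hsat (F ∪ F₁) (by
          intro x hx
          rcases Finset.mem_union.mp hx with hx | hx
          · exact hFM x hx
          · exact hF₁M x hx)
        have hnp : ¬ w p := hF₁ w hw (fun x hx => hwF x (Finset.mem_union_right _ hx))
        exact hF w hw (fun x hx => hwF x (Finset.mem_union_left _ hx))
          ((hw.2.2.2.1 p q).mpr (fun hwp => absurd hwp hnp))
  · -- bot
    intro hbot
    obtain ⟨w, hw, hwF⟩ := hsat {S.bot} (by
      intro x hx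
      rcases Finset.mem_singleton.mp hx with rfl
      exact hbot)
    exact hw.2.2.2.2.1 (hwF _ (by simp))
  · -- top
    by_contra htop
    obtain ⟨F, hFM, hF⟩ := hbad _ htop
    obtain ⟨w, hw, hwF⟩ := hsat F hFM
    exact hF w hw hwF hw.2.2.2.2.2

/-- For a disjunctive entrenchment relation, α |~⪯ β iff ¬β ⪯ ¬α. -/
theorem stmt17 {L : Type} (S : Lang L) (pr : L → L → Prop)
    (hrefl : ∀ a, pr a a)
    (hlm : ∀ a b c, S.ent a b → pr b c → pr a c)
    (hle : ∀ a b c, S.ent a b → S.ent b a → (pr c a ↔ pr c b))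
    (hld : ∀ a b c, pr b a → pr c a → pr (S.or b c) a) :
    ∀ a b, MInf S pr a b ↔ pr (S.not b) (S.not a) := by
  intro a b
  constructor
  · -- MInf → pr
    intro hminf
    by_contra hnp
    classical
    set X : Set L :=
      insert a (insert (S.not b) {x | ∃ c, pr c (S.not a) ∧ x = S.not c}) with hXdef
    have key : ∀ F : Finset L, ↑F ⊆ X →
        ∃ d, pr d (S.not a) ∧
          ∀ v, S.Val v → v a → ¬ v b → ¬ v d → ∀ x ∈ F, v x := by
      intro F
      induction F using Finset.induction_on with
      | empty =>
        intro _
        exact ⟨S.not a, hrefl _, fun v hv hva hvb hvd x hx => absurd hx (by simp)⟩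
      | @insert y s hys ih =>
        intro hsub
        have hssub : ↑s ⊆ X := by
          intro x hx
          exact hsub (by simp [hx])
        obtain ⟨d, hd, hdp⟩ := ih hssub
        have hyX : y ∈ X := hsub (by simp)
        rcases Set.mem_insert_iff.mp hyX with rfl | hyX
        · refine ⟨d, hd, fun v hv hva hvb hvd x hx => ?_⟩
          rcases Finset.mem_insert.mp hx with rfl | hx
          · exact hva
          · exact hdp v hv hva hvb hvd x hx
        · rcases Set.mem_insert_iff.mp hyX with rfl | hyX
          · refine ⟨d, hd, fun v hv hva hvb hvd x hx => ?_⟩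
            rcases Finset.mem_insert.mp hx with rfl | hx
            · exact (hv.2.2.1 b).mpr hvb
            · exact hdp v hv hva hvb hvd x hx
          · obtain ⟨c, hc, rfl⟩ := hyX
            refine ⟨S.or d c, hld _ _ _ hd hc, fun v hv hva hvb hvd x hx => ?_⟩
            have hnd : ¬ v d := fun h => hvd ((hv.1 d c).mpr (Or.inl h))
            have hnc : ¬ v c := fun h => hvd ((hv.1 d c).mpr (Or.inr h))
            rcases Finset.mem_insert.mp hx with rfl | hx
            · exact (hv.2.2.1 c).mpr hnc
            · exact hdp v hv hva hvb hnd x hx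
    have hfin : FinSat S X := by
      intro F hF
      obtain ⟨d, hd, hdp⟩ := key F hF
      have hex : ∃ w, S.Val w ∧ w a ∧ ¬ w b ∧ ¬ w d := by
        by_contra hno
        push_neg at hno
        have hent : S.ent (S.not b) (S.or (S.not a) d) := by
          intro w hw hws
          have hnb : ¬ w b := (hw.2.2.1 b).mp (hws _ rfl)
          refine (hw.1 _ _).mpr ?_
          by_cases hwa : w a
          · exact Or.inr (hno w hw hwa hnb)
          · exact Or.inl ((hw.2.2.1 a).mpr hwa)
        exact hnp (hlm _ _ _ hent (hld _ _ _ (hrefl _) hd))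
      obtain ⟨w, hw, hwa, hwb, hwd⟩ := hex
      exact ⟨w, hw, hdp w hw hwa hwb hwd⟩
    obtain ⟨v, hv, hvX⟩ := lindenbaum S hfin
    have hva : v a := hvX a (Set.mem_insert _ _)
    have hvnb : v (S.not b) := hvX _ (Set.mem_insert_of_mem _ (Set.mem_insert _ _))
    have hU : {c | v c} ∈ MaxBase S pr a := by
      refine ⟨⟨?_, ?_⟩, ?_⟩
      · apply Set.Subset.antisymm
        · intro c hc w hw hwU
          exact hwU c hc
        · intro c hc
          exact hc v hv (fun x hx => hx)
      · intro c hc hcp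
        have hvnc : v (S.not c) :=
          hvX _ (Set.mem_insert_of_mem _ (Set.mem_insert_of_mem _ ⟨c, hcp, rfl⟩))
        exact (hv.2.2.1 c).mp hvnc hc
      · intro U' hU'cn hss hU'base
        obtain ⟨c, hcU', hcU⟩ := Set.exists_of_ssubset hss
        have hnc : S.not c ∈ U' := hss.1 (show v (S.not c) from (hv.2.2.1 c).mpr hcU)
        have hna : S.not a ∈ U' := by
          rw [hU'cn]
          intro w hw hwU'
          exact absurd (hwU' c hcU') ((hw.2.2.1 c).mp (hwU' _ hnc))
        exact hU'base.2 hna (hrefl _)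
    have hb := hminf _ hU v hv (fun x hx => by
      rcases hx with hx | hx
      · exact hx
      · have : x = a := hx
        subst this
        exact hva)
    exact (hv.2.2.1 b).mp hvnb hb
  · -- pr → MInf
    intro hpr U hU
    obtain ⟨⟨hUcn, hUcoh⟩, hUmax⟩ := hU
    have htopU : S.top ∈ U := by
      rw [hUcn]
      intro w hw _
      exact hw.2.2.2.2.2
    have hcohimp : ¬ pr (S.imp a b) (S.not a) := by
      intro hc
      have h1 : pr (S.or (S.not b) (S.imp a b)) (S.not a) := hld _ _ _ hpr hc
      have h2 : pr S.top (S.not a) := hlm _ _ _ (ent_taut_orimp S _ _ _) h1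
      exact hUcoh htopU h2
    have himpU : S.imp a b ∈ U := by
      by_contra hni
      have himpmem : S.imp a b ∈ S.Cn (U ∪ {S.imp a b}) :=
        fun w hw hwU => hwU _ (Or.inr rfl)
      have hU'cn : S.Cn (U ∪ {S.imp a b}) = S.Cn (S.Cn (U ∪ {S.imp a b})) :=
        (Cn_idem S _).symm
      have hss : U ⊂ S.Cn (U ∪ {S.imp a b}) := by
        rw [Set.ssubset_def]
        constructor
        · intro x hx w hw hwU
          exact hwU x (Or.inl hx)
        · intro hsup
          exact hni (hsup himpmem)
      have hU'coh : S.Cn (U ∪ {S.imp a b}) ⊆ Coh S pr a := by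
        intro c hc hcpr
        have hdU : S.imp (S.imp a b) c ∈ U := by
          rw [hUcn]
          intro w hw hwU
          refine (hw.2.2.2.1 _ _).mpr (fun hwi => ?_)
          refine hc w hw (fun x hx => ?_)
          rcases hx with hx | hx
          · exact hwU x hx
          · have : x = S.imp a b := hx
            subst this
            exact hwi
        have h1 : pr (S.not (S.imp a b)) (S.not a) := hlm _ _ _ (ent_notimp S a b) hpr
        have h2 : pr (S.or c (S.not (S.imp a b))) (S.not a) := hld _ _ _ hcpr h1
        have h3 : pr (S.imp (S.imp a b) c) (S.not a) :=
          hlm _ _ _ (ent_impimp S a b c) h2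
        exact hUcoh hdU h3
      exact hUmax _ hU'cn hss ⟨hU'cn, hU'coh⟩
    intro w hw hwU
    have hwimp : w (S.imp a b) := hwU _ (Or.inl himpU)
    have hwa : w a := hwU a (Or.inr rfl)
    exact (hw.2.2.2.1 a b).mp hwimp hwa
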